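/- Fix integers K ≥ m ≥ 1, ε > 0, c : T_{K,m} → [0,1/K], and x ∈ [0,1]^K. Suppose the output P̂ = P_{c,ε}(x) of the partition algorithm is not a leaf of T_{K,m}. Then there exists an ancestor Q ⪯ P̂ and a child Q_j of Q in T_{K,m} such that |gap_{Q_j}(x) − c(Q)·range_Q(x)| ≤ 10Kε. -/

import Mathlib

open Classical

noncomputable section

namespace MPB

variable (K m : ℕ)

/-- Max of `x` over a finite set of coordinates. -/
def fmax (x : Fin K → ℝ) (S : Finset (Fin K)) : ℝ := sSup (x '' ↑S)

/-- Min of `x` over a finite set of coordinates. -/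
def fmin (x : Fin K → ℝ) (S : Finset (Fin K)) : ℝ := sInf (x '' ↑S)

/-- range_B(x) = max_{k∈B} x(k) - min_{k∈B} x(k). -/
def rangeX (x : Fin K → ℝ) (B : Finset (Fin K)) : ℝ := fmax K x B - fmin K x B

/-- gap of the child obtained by splitting `B` into `T > B \ T`:
gap = min_{k∈T} x(k) - max_{ℓ∈B\T} x(ℓ). -/
def gapX (x : Fin K → ℝ) (T B : Finset (Fin K)) : ℝ := fmin K x T - fmax K x (B \ T)

/-- i(P): the largest `i` such that the first `i` parts of the ordered partition `L`
have total size at most `m`. -/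
def iIdx (L : List (Finset (Fin K))) : ℕ :=
  Nat.findGreatest (fun i => ((L.take i).map Finset.card).sum ≤ m) L.length

/-- A(P): the union of the first i(P) parts (the coordinates already identified as
belonging to the top m). -/
def Aset (L : List (Finset (Fin K))) : Finset (Fin K) :=
  (L.take (iIdx K m L)).foldr (· ∪ ·) ∅

/-- B(P): the currently undecided part; `∅` if `|A(P)| = m`, else the part S_{i(P)+1}. -/
def Bset (L : List (Finset (Fin K))) : Finset (Fin K) :=
  if (Aset K m L).card = m then ∅ else L.getD (iIdx K m L) ∅

/-- A vertex of the tree T_{K,m} is encoded by the sequence of splits leading to it from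
the root (head = most recently chosen top part): this recovers its underlying ordered
partition, by splitting at each step the then-current undecided set B into `T > B \ T`. -/
def partitionOf : List (Finset (Fin K)) → List (Finset (Fin K))
  | [] => [Finset.univ]
  | T :: l =>
    let L := partitionOf l
    let i := iIdx K m L
    L.take i ++ [T, L.getD i ∅ \ T] ++ L.drop (i + 1)

/-- A(P) for a vertex of T_{K,m}. -/
def Anode (l : List (Finset (Fin K))) : Finset (Fin K) := Aset K m (partitionOf K m l)

/-- B(P) for a vertex of T_{K,m}. -/
def Bnode (l : List (Finset (Fin K))) : Finset (Fin K) := Bset K m (partitionOf K m l)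

/-- Membership in T_{K,m}: each successive split must cut the current undecided set B
into a nonempty strict subset (the new top part) and the rest. The root is `[]`, a
vertex is a leaf iff its `Bnode` is empty, `T :: l` is a child of `l`, and the ancestors
of a vertex are exactly its list suffixes. -/
def Valid : List (Finset (Fin K)) → Prop
  | [] => True
  | T :: l => Valid l ∧ T.Nonempty ∧ T ⊂ Bnode K m l

/-- The elements of `B` sorted by `x` in (weakly) decreasing order,
ties broken by coordinate index (stability of merge sort). -/
def sortedB (x : Fin K → ℝ) (B : Finset (Fin K)) : List (Fin K) :=
  (B.sort (· ≤ ·)).mergeSort (fun a b => decide (x b ≤ x a))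

/-- The set `{a_1, …, a_j}` of the `j` largest coordinates of `B` under `x`. -/
def topSet (x : Fin K → ℝ) (B : Finset (Fin K)) (j : ℕ) : Finset (Fin K) :=
  ((sortedB K x B).take j).toFinset

/-- Line 7 of Algorithm 1: the algorithm, currently at the vertex `l`, returns `l`
because for some ancestor `q ⪯ l` and some child `q_j` of `q` (splitting B(q) at the
`j`-th position of the `x`-sorted order), the quantity `gap_{q_j}(x) - c(q)·range_q(x)`
is within `(d(l,q)+1)·6ε` of zero. -/
def stopAt (c : List (Finset (Fin K)) → ℝ) (ε : ℝ) (x : Fin K → ℝ)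
    (l : List (Finset (Fin K))) : Prop :=
  ∃ q ∈ l.tails, ∃ j, 1 ≤ j ∧ j < (Bnode K m q).card ∧
    |gapX K x (topSet K x (Bnode K m q) j) (Bnode K m q) - c q * rangeX K x (Bnode K m q)|
      ≤ ((l.length - q.length + 1 : ℕ) : ℝ) * (6 * ε)

/-- Lines 10-15 of Algorithm 1: move from `l` to the child `l_j` for the smallest
`j ∈ {1, …, ℓ-1}` with `gap_{l_j}(x) ≥ c(l)·range_l(x)`. -/
def descend (c : List (Finset (Fin K)) → ℝ) (x : Fin K → ℝ)
    (l : List (Finset (Fin K))) : List (Finset (Fin K)) :=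
  if h : ∃ j, 1 ≤ j ∧ j < (Bnode K m l).card ∧
      c l * rangeX K x (Bnode K m l)
        ≤ gapX K x (topSet K x (Bnode K m l) j) (Bnode K m l)
  then topSet K x (Bnode K m l) (Nat.find h) :: l
  else l

/-- The while loop of Algorithm 1, with fuel (the tree T_{K,m} has depth < K, so fuel K
suffices for the loop to terminate as in the paper). -/
def run (c : List (Finset (Fin K)) → ℝ) (ε : ℝ) (x : Fin K → ℝ) :
    ℕ → List (Finset (Fin K)) → List (Finset (Fin K))
  | 0, l => l
  | n + 1, l =>
    if Bnode K m l = ∅ then l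
    else if stopAt K m c ε x l then l
    else run c ε x n (descend K m c x l)

/-- The vertex P_{c,ε}(x) ∈ T_{K,m} output by Algorithm 1 on input x. The vertices
visited by the while loop are exactly the suffixes of the output. -/
def Pmap (c : List (Finset (Fin K)) → ℝ) (ε : ℝ) (x : Fin K → ℝ) :
    List (Finset (Fin K)) :=
  run K m c ε x K []

/-! ### Auxiliary lemmas -/

section AuxSorted

variable {K : ℕ} (x : Fin K → ℝ)

lemma sortedB_perm (B : Finset (Fin K)) : List.Perm (sortedB K x B) (B.sort (· ≤ ·)) :=
  List.mergeSort_perm _ _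

lemma sortedB_nodup (B : Finset (Fin K)) : (sortedB K x B).Nodup :=
  ((sortedB_perm x B).nodup_iff).mpr (Finset.sort_nodup _ _)

lemma sortedB_length (B : Finset (Fin K)) : (sortedB K x B).length = B.card := by
  rw [(sortedB_perm x B).length_eq, Finset.length_sort]

lemma mem_sortedB {B : Finset (Fin K)} {a : Fin K} : a ∈ sortedB K x B ↔ a ∈ B := by
  rw [(sortedB_perm x B).mem_iff, Finset.mem_sort]

lemma sortedB_toFinset (B : Finset (Fin K)) : (sortedB K x B).toFinset = B := by
  ext a; rw [List.mem_toFinset, mem_sortedB]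

lemma sortedB_sorted (B : Finset (Fin K)) :
    List.Pairwise (fun a b => x b ≤ x a) (sortedB K x B) := by
  have htot : ∀ a b : Fin K, ((fun a b : Fin K => decide (x b ≤ x a)) a b ||
      (fun a b : Fin K => decide (x b ≤ x a)) b a) = true := by
    intro a b; simpa using le_total (x b) (x a)
  have htr : ∀ a b c : Fin K, (fun a b : Fin K => decide (x b ≤ x a)) a b = true →
      (fun a b : Fin K => decide (x b ≤ x a)) b c = true →
      (fun a b : Fin K => decide (x b ≤ x a)) a c = true := by
    intro a b c hab hbc
    simp only [decide_eq_true_eq] at *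
    exact le_trans hbc hab
  have := List.pairwise_mergeSort htr htot (B.sort (· ≤ ·))
  exact this.imp (fun h => by simpa using h)

lemma sorted_le {L : List (Fin K)} (hs : List.Pairwise (fun a b => x b ≤ x a) L)
    {i j : ℕ} (hij : i ≤ j) (hj : j < L.length) :
    x (L[j]'hj) ≤ x (L[i]'(lt_of_le_of_lt hij hj)) := by
  rcases eq_or_lt_of_le hij with rfl | hlt
  · exact le_refl _
  · exact List.pairwise_iff_get.mp hs ⟨i, by omega⟩ ⟨j, hj⟩ hlt

lemma topSet_subset (B : Finset (Fin K)) (j : ℕ) : topSet K x B j ⊆ B := by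
  intro a ha
  rw [topSet, List.mem_toFinset] at ha
  exact (mem_sortedB x).mp ((List.take_sublist _ _).subset ha)

lemma card_topSet (B : Finset (Fin K)) {j : ℕ} (h : j ≤ B.card) :
    (topSet K x B j).card = j := by
  rw [topSet, List.toFinset_card_of_nodup
    ((List.take_sublist _ _).nodup (sortedB_nodup x B))]
  rw [List.length_take, sortedB_length]
  omega

lemma topSet_nonempty (B : Finset (Fin K)) {j : ℕ} (h1 : 1 ≤ j) (h2 : j ≤ B.card) :
    (topSet K x B j).Nonempty := by
  rw [← Finset.card_pos, card_topSet x B h2]; omega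

lemma topSet_ssubset (B : Finset (Fin K)) {j : ℕ} (hj : j < B.card) :
    topSet K x B j ⊂ B := by
  rw [Finset.ssubset_iff_subset_ne]
  refine ⟨topSet_subset x B j, fun h => ?_⟩
  have := card_topSet x B hj.le
  rw [h] at this; omega

lemma fmin_eq_inf' {S : Finset (Fin K)} (h : S.Nonempty) : fmin K x S = S.inf' h x :=
  (Finset.inf'_eq_csInf_image S h x).symm

lemma fmax_eq_sup' {S : Finset (Fin K)} (h : S.Nonempty) : fmax K x S = S.sup' h x :=
  (Finset.sup'_eq_csSup_image S h x).symm

lemma rangeX_nonneg {S : Finset (Fin K)} (h : S.Nonempty) : 0 ≤ rangeX K x S := by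
  obtain ⟨b, hb⟩ := h
  rw [rangeX, fmin_eq_inf' x ⟨b, hb⟩, fmax_eq_sup' x ⟨b, hb⟩, sub_nonneg]
  exact le_trans (Finset.inf'_le x hb) (Finset.le_sup' x hb)

lemma fmin_take {L : List (Fin K)} (hs : List.Pairwise (fun a b => x b ≤ x a) L)
    {j : ℕ} (h1 : 1 ≤ j) (h2 : j ≤ L.length) :
    fmin K x (L.take j).toFinset = x (L[j-1]'(by omega)) := by
  have hmemL : (L.take j)[j-1]'(by rw [List.length_take]; omega) = L[j-1]'(by omega) :=
    List.getElem_take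
  have hmem : L[j-1]'(by omega) ∈ (L.take j).toFinset := by
    rw [List.mem_toFinset, ← hmemL]
    exact List.getElem_mem _
  have hne : ((L.take j).toFinset).Nonempty := ⟨_, hmem⟩
  rw [fmin_eq_inf' x hne]
  refine le_antisymm (Finset.inf'_le _ hmem) (Finset.le_inf' _ _ ?_)
  intro b hb
  rw [List.mem_toFinset, List.mem_iff_getElem] at hb
  obtain ⟨n, hn, rfl⟩ := hb
  have hn' : n < j := by rw [List.length_take] at hn; omega
  rw [List.getElem_take]
  exact sorted_le x hs (by omega) (by omega)

lemma fmax_drop {L : List (Fin K)} (hs : List.Pairwise (fun a b => x b ≤ x a) L)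
    {j : ℕ} (h : j < L.length) :
    fmax K x (L.drop j).toFinset = x (L[j]'h) := by
  have hmemL : (L.drop j)[0]'(by rw [List.length_drop]; omega) = L[j]'h := by
    rw [List.getElem_drop]; simp
  have hmem : L[j]'h ∈ (L.drop j).toFinset := by
    rw [List.mem_toFinset, ← hmemL]
    exact List.getElem_mem _
  have hne : ((L.drop j).toFinset).Nonempty := ⟨_, hmem⟩
  rw [fmax_eq_sup' x hne]
  refine le_antisymm (Finset.sup'_le _ _ ?_) (Finset.le_sup' _ hmem)
  intro b hb
  rw [List.mem_toFinset, List.mem_iff_getElem] at hb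
  obtain ⟨n, hn, rfl⟩ := hb
  have hn' : j + n < L.length := by rw [List.length_drop] at hn; omega
  rw [List.getElem_drop]
  exact sorted_le x hs (by omega) (by omega)

lemma diff_take {L : List (Fin K)} (hnd : L.Nodup) (j : ℕ) :
    L.toFinset \ (L.take j).toFinset = (L.drop j).toFinset := by
  have hd : (L.take j).Disjoint (L.drop j) := by
    have h2 := hnd
    rw [← List.take_append_drop j L, List.nodup_append] at h2
    exact fun a ha hb => h2.2.2 a ha a hb rfl
  ext a
  simp only [Finset.mem_sdiff, List.mem_toFinset]
  constructor
  · rintro ⟨hL, ht⟩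
    rw [← List.take_append_drop j L, List.mem_append] at hL
    tauto
  · intro hdrop
    exact ⟨(List.drop_sublist j L).subset hdrop, fun ht => hd ht hdrop⟩

lemma gap_eq (B : Finset (Fin K)) {j : ℕ} (h1 : 1 ≤ j) (h2 : j < B.card) :
    gapX K x (topSet K x B j) B =
      x ((sortedB K x B)[j-1]'(by rw [sortedB_length]; omega)) -
      x ((sortedB K x B)[j]'(by rw [sortedB_length]; omega)) := by
  have hlen : (sortedB K x B).length = B.card := sortedB_length x B
  have hs := sortedB_sorted x B
  have hdiff : B \ topSet K x B j = ((sortedB K x B).drop j).toFinset := by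
    rw [topSet, ← diff_take (sortedB_nodup x B) j, sortedB_toFinset]
  rw [topSet] at hdiff
  rw [gapX, topSet, hdiff, fmin_take x hs h1 (by omega), fmax_drop x hs (by omega)]

lemma rangeX_eq (B : Finset (Fin K)) (h : 1 ≤ B.card) :
    rangeX K x B =
      x ((sortedB K x B)[0]'(by rw [sortedB_length]; omega)) -
      x ((sortedB K x B)[B.card - 1]'(by rw [sortedB_length]; omega)) := by
  have hlen : (sortedB K x B).length = B.card := sortedB_length x B
  have hs := sortedB_sorted x B
  have hmax : B = ((sortedB K x B).drop 0).toFinset := by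
    rw [List.drop_zero, sortedB_toFinset]
  have hmin : B = ((sortedB K x B).take ((sortedB K x B).length)).toFinset := by
    rw [List.take_length, sortedB_toFinset]
  rw [rangeX]
  nth_rewrite 1 [hmax]
  nth_rewrite 2 [hmin]
  rw [fmax_drop x hs (by omega), fmin_take x hs (by omega) (le_refl _)]
  simp only [hlen]

lemma exists_gap (hK : 1 ≤ K) {B : Finset (Fin K)} (hB : 2 ≤ B.card) {cv : ℝ}
    (hc0 : 0 ≤ cv) (hc1 : cv ≤ 1 / K) :
    ∃ j, 1 ≤ j ∧ j < B.card ∧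
      cv * rangeX K x B ≤ gapX K x (topSet K x B j) B := by
  by_contra hcon
  push_neg at hcon
  have hlen : (sortedB K x B).length = B.card := sortedB_length x B
  set L := sortedB K x B with hLdef
  set ℓ := B.card with hldef
  have h0 : 0 < L.length := by omega
  set F : ℕ → ℝ := fun k => x (L.getD k (L[0]'h0)) with hF
  have hFk : ∀ k, ∀ hk : k < L.length, F k = x (L[k]'hk) := by
    intro k hk; rw [hF]; exact congrArg x (List.getD_eq_getElem _ _ hk)
  have htel : ∑ i ∈ Finset.range (ℓ - 1), (F i - F (i+1)) = F 0 - F (ℓ-1) :=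
    Finset.sum_range_sub' F (ℓ-1)
  have hrange : rangeX K x B = F 0 - F (ℓ-1) := by
    rw [hFk 0 (by omega), hFk (ℓ-1) (by omega), rangeX_eq x B (by omega)]
  have hterm : ∀ i ∈ Finset.range (ℓ-1), F i - F (i+1) < cv * rangeX K x B := by
    intro i hi
    rw [Finset.mem_range] at hi
    have hg := hcon (i+1) (by omega) (by omega)
    rw [gap_eq x B (by omega) (by omega)] at hg
    rw [hFk i (by omega), hFk (i+1) (by omega)]
    simpa using hg
  have hsum := Finset.sum_lt_sum_of_nonempty
    (by rw [Finset.nonempty_range_iff]; omega) hterm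
  rw [htel, Finset.sum_const, Finset.card_range, nsmul_eq_mul, ← hrange] at hsum
  have hBne : B.Nonempty := Finset.card_pos.mp (by omega)
  have hr0 : 0 ≤ rangeX K x B := rangeX_nonneg x hBne
  have hKpos : (0:ℝ) < K := by exact_mod_cast hK
  have hcK : cv * K ≤ 1 := by
    rw [← le_div_iff₀ hKpos]; exact hc1
  have hcardK : ℓ ≤ K := le_trans (Finset.card_le_univ B) (by simp)
  have hlK : ((ℓ - 1 : ℕ) : ℝ) ≤ (K : ℝ) := by
    have h9 : ℓ - 1 ≤ K := by omega
    exact_mod_cast h9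
  nlinarith [mul_nonneg (mul_nonneg (sub_nonneg.mpr hlK) hc0) hr0,
    mul_nonneg (sub_nonneg.mpr hcK) hr0]

end AuxSorted

section AuxStruct

variable {K m : ℕ}

lemma getD_append_mid {α : Type*} (l1 l2 : List α) (a d : α) :
    (l1 ++ a :: l2).getD l1.length d = a := by
  rw [List.getD_eq_getElem _ _ (by simp),
    List.getElem_append_right (le_refl _)]
  simp

lemma sum_take_mono (L : List (Finset (Fin K))) {k k' : ℕ} (h : k ≤ k') :
    ((L.take k).map Finset.card).sum ≤ ((L.take k').map Finset.card).sum := by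
  have heq : L.take k = (L.take k').take k := by
    rw [List.take_take, min_eq_left h]
  have hsub : List.Sublist (L.take k) (L.take k') := heq ▸ List.take_sublist _ _
  exact List.Sublist.sum_le_sum (hsub.map _) (fun a _ => Nat.zero_le _)

lemma iIdx_le (L : List (Finset (Fin K))) : iIdx K m L ≤ L.length :=
  Nat.findGreatest_le _

lemma sum_take_iIdx_le (L : List (Finset (Fin K))) :
    ((L.take (iIdx K m L)).map Finset.card).sum ≤ m := by
  have h := Nat.findGreatest_spec (P := fun i => ((L.take i).map Finset.card).sum ≤ m)
    (n := L.length) (Nat.zero_le _) (by simp)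
  exact h

lemma iIdx_greatest (L : List (Finset (Fin K))) {k : ℕ} (h1 : iIdx K m L < k)
    (h2 : k ≤ L.length) : ¬ ((L.take k).map Finset.card).sum ≤ m := by
  rw [iIdx] at h1
  exact Nat.findGreatest_is_greatest
    (P := fun i => ((L.take i).map Finset.card).sum ≤ m) (n := L.length) h1 h2

lemma le_iIdx (L : List (Finset (Fin K))) {k : ℕ} (h2 : k ≤ L.length)
    (h1 : ((L.take k).map Finset.card).sum ≤ m) : k ≤ iIdx K m L := by
  rw [iIdx]
  exact Nat.le_findGreatest h2 h1

lemma mem_foldr_union {L : List (Finset (Fin K))} {a : Fin K} :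
    a ∈ L.foldr (· ∪ ·) ∅ ↔ ∃ S ∈ L, a ∈ S := by
  induction L with
  | nil => simp
  | cons b t ih => simp [ih]

lemma foldr_union_init (L : List (Finset (Fin K))) (X : Finset (Fin K)) :
    L.foldr (· ∪ ·) X = L.foldr (· ∪ ·) ∅ ∪ X := by
  induction L with
  | nil => simp
  | cons a t ih => simp [ih, Finset.union_assoc]

lemma card_foldr_union {L : List (Finset (Fin K))} (h : L.Pairwise Disjoint) :
    (L.foldr (· ∪ ·) ∅).card = (L.map Finset.card).sum := by
  induction L with
  | nil => simp
  | cons a t ih =>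
    rw [List.pairwise_cons] at h
    have hd : Disjoint a (t.foldr (· ∪ ·) ∅) := by
      rw [Finset.disjoint_left]
      intro b hb hbf
      rw [mem_foldr_union] at hbf
      obtain ⟨S, hS, hbS⟩ := hbf
      exact Finset.disjoint_left.mp (h.1 S hS) hb hbS
    simp only [List.foldr_cons, List.map_cons, List.sum_cons]
    rw [Finset.card_union_of_disjoint hd, ih h.2]

lemma Bnode_props {l : List (Finset (Fin K))} (hB : Bnode K m l ≠ ∅) :
    ∃ hi : iIdx K m (partitionOf K m l) < (partitionOf K m l).length,
      (Aset K m (partitionOf K m l)).card ≠ m ∧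
      Bnode K m l = (partitionOf K m l)[iIdx K m (partitionOf K m l)]'hi := by
  have hA : (Aset K m (partitionOf K m l)).card ≠ m := by
    intro h; exact hB (by simp [Bnode, Bset, h])
  have hgd : Bnode K m l = (partitionOf K m l).getD (iIdx K m (partitionOf K m l)) ∅ := by
    simp [Bnode, Bset, hA]
  have hi : iIdx K m (partitionOf K m l) < (partitionOf K m l).length := by
    by_contra h
    push_neg at h
    rw [List.getD_eq_default _ _ h] at hgd
    exact hB hgd
  exact ⟨hi, hA, by rw [hgd, List.getD_eq_getElem _ _ hi]⟩

lemma sum_take_succ_eq (L : List (Finset (Fin K))) {i : ℕ} (hi : i < L.length) :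
    ((L.take (i+1)).map Finset.card).sum
      = ((L.take i).map Finset.card).sum + (L[i]'hi).card := by
  rw [← List.take_concat_get hi, List.concat_eq_append, List.map_append,
    List.sum_append]
  simp

lemma two_le_card_Bnode {l : List (Finset (Fin K))}
    (hp : (partitionOf K m l).Pairwise Disjoint) (hB : Bnode K m l ≠ ∅) :
    2 ≤ (Bnode K m l).card := by
  obtain ⟨hi, hA, hBeq⟩ := Bnode_props hB
  set L := partitionOf K m l with hLdef
  set i := iIdx K m L with hidef
  have hAcard : (Aset K m L).card = ((L.take i).map Finset.card).sum :=
    card_foldr_union (List.Pairwise.sublist (List.take_sublist _ _) hp)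
  have h1 : ((L.take i).map Finset.card).sum ≤ m := sum_take_iIdx_le L
  have h2 : ¬ ((L.take (i+1)).map Finset.card).sum ≤ m :=
    iIdx_greatest L (Nat.lt_succ_self _) hi
  have h3 := sum_take_succ_eq L hi
  rw [← hBeq] at h3
  omega

lemma child_spec {l : List (Finset (Fin K))} (T : Finset (Fin K))
    (hTne : T.Nonempty) (hTB : T ⊂ Bnode K m l)
    (hp : (partitionOf K m l).Pairwise Disjoint) :
    (partitionOf K m (T :: l)).Pairwise Disjoint ∧
      (Bnode K m (T :: l)).card < (Bnode K m l).card := by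
  have hTsubB : T ⊆ Bnode K m l := hTB.subset
  have hBne : Bnode K m l ≠ ∅ := by
    intro h
    rw [h, Finset.subset_empty] at hTsubB
    exact hTne.ne_empty hTsubB
  obtain ⟨hi, hA, hBeq⟩ := Bnode_props hBne
  set L := partitionOf K m l with hLdef
  set i := iIdx K m L with hidef
  set B := Bnode K m l with hBdef
  have hgd : L.getD i ∅ = B := by rw [hBeq, List.getD_eq_getElem _ _ hi]
  have hL' : partitionOf K m (T :: l)
      = L.take i ++ [T, B \ T] ++ L.drop (i + 1) := by
    show (partitionOf K m l).take (iIdx K m (partitionOf K m l)) ++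
        [T, (partitionOf K m l).getD (iIdx K m (partitionOf K m l)) ∅ \ T] ++
        (partitionOf K m l).drop (iIdx K m (partitionOf K m l) + 1)
      = L.take i ++ [T, B \ T] ++ L.drop (i + 1)
    rw [← hLdef, ← hidef, hgd]
  have htklen : (L.take i).length = i := by
    rw [List.length_take]; omega
  have hLdec : L = L.take i ++ B :: L.drop (i + 1) := by
    conv_lhs => rw [← List.take_append_drop i L]
    rw [List.drop_eq_getElem_cons hi, ← hBeq]
  -- unpack pairwise
  rw [hLdec, List.pairwise_append, List.pairwise_cons] at hp
  obtain ⟨hp1, ⟨hpB, hp2⟩, hp3⟩ := hp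
  constructor
  · -- pairwise disjointness of the child's partition
    rw [hL', List.pairwise_append]
    refine ⟨List.pairwise_append.mpr ⟨hp1, ?_, ?_⟩, hp2, ?_⟩
    · refine List.pairwise_cons.mpr ⟨?_, ?_⟩
      · intro b hb
        simp only [List.mem_singleton] at hb
        subst hb
        exact Finset.disjoint_sdiff
      · simp
    · intro a ha b hb
      have hdab : Disjoint a B := hp3 a ha B List.mem_cons_self
      simp only [List.mem_cons, List.mem_singleton, List.not_mem_nil,
        or_false] at hb
      rcases hb with rfl | rfl
      · exact hdab.mono_right hTsubB
      · exact hdab.mono_right Finset.sdiff_subset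
    · intro a ha b hb
      rcases List.mem_append.mp ha with ha | ha
      · exact hp3 a ha b (List.mem_cons_of_mem _ hb)
      · have hBb : Disjoint B b := hpB b hb
        simp only [List.mem_cons, List.mem_singleton, List.not_mem_nil,
          or_false] at ha
        rcases ha with rfl | rfl
        · exact hBb.mono_left hTsubB
        · exact hBb.mono_left Finset.sdiff_subset
  · -- the new undecided set is strictly smaller
    set L2 := partitionOf K m (T :: l) with hL2def
    have hlen2 : L2.length = L.length + 1 := by
      rw [hL']
      simp only [List.length_append, List.length_cons, htklen,
        List.length_drop, List.length_nil]
      omega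
    have hs_eq : ∀ k, k ≤ i → L2.take k = L.take k := by
      intro k hk
      rw [hL', List.append_assoc, List.take_append_of_le_length (by omega),
        List.take_take, min_eq_left hk]
    have htake_i1 : L2.take (i + 1) = L.take i ++ [T] := by
      have h := List.take_length_add_append (l₁ := L.take i)
        (l₂ := [T, B \ T] ++ L.drop (i + 1)) 1
      rw [htklen] at h
      rw [hL', List.append_assoc, h]
      simp
    have htake_i2 : L2.take (i + 2) = L.take i ++ [T, B \ T] := by
      have h := List.take_length_add_append (l₁ := L.take i)
        (l₂ := [T, B \ T] ++ L.drop (i + 1)) 2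
      rw [htklen] at h
      rw [hL', List.append_assoc]
      rw [show i + 2 = i + 2 from rfl, h]
      simp
    have hcardBT : (B \ T).card + T.card = B.card :=
      Finset.card_sdiff_add_card_eq_card hTsubB
    have hsum_i1 : ((L2.take (i + 1)).map Finset.card).sum
        = ((L.take i).map Finset.card).sum + T.card := by
      rw [htake_i1, List.map_append, List.sum_append]
      simp
    have hsum_i2 : ((L2.take (i + 2)).map Finset.card).sum
        = ((L.take i).map Finset.card).sum + B.card := by
      rw [htake_i2, List.map_append, List.sum_append]
      simp
      omega
    have h_s_i : ((L.take i).map Finset.card).sum ≤ m := sum_take_iIdx_le L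
    have h_not : ¬ ((L.take (i + 1)).map Finset.card).sum ≤ m :=
      iIdx_greatest L (Nat.lt_succ_self _) hi
    have h_succ := sum_take_succ_eq L hi
    rw [← hBeq] at h_succ
    have hBposcard : 0 < B.card := Finset.card_pos.mpr (hTne.mono hTsubB)
    by_cases hT : ((L.take i).map Finset.card).sum + T.card ≤ m
    · -- the new part fits: i' = i + 1
      have hle : i + 1 ≤ iIdx K m L2 :=
        le_iIdx L2 (by omega) (by rw [hsum_i1]; exact hT)
      have hge : iIdx K m L2 ≤ i + 1 := by
        by_contra hgt
        push_neg at hgt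
        have hspec := sum_take_iIdx_le (K := K) (m := m) L2
        have hmono := sum_take_mono L2 (show i + 2 ≤ iIdx K m L2 by omega)
        omega
      have hi' : iIdx K m L2 = i + 1 := le_antisymm hge hle
      have hAset2 : Aset K m L2 = Aset K m L ∪ T := by
        show (L2.take (iIdx K m L2)).foldr (· ∪ ·) ∅ = Aset K m L ∪ T
        rw [hi', htake_i1, List.foldr_append, foldr_union_init]
        show (L.take i).foldr (· ∪ ·) ∅ ∪ (T ∪ ∅) = Aset K m L ∪ T
        rw [Finset.union_empty]
        rfl
      have hgd2 : L2.getD (i + 1) ∅ = B \ T := by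
        have hsplit : L2 = (L.take i ++ [T]) ++ (B \ T) :: L.drop (i + 1) := by
          rw [hL']
          simp
        have h := getD_append_mid (L.take i ++ [T]) (L.drop (i + 1)) (B \ T) ∅
        rw [List.length_append, htklen] at h
        rw [hsplit]
        simpa using h
      show (Bset K m L2).card < B.card
      rw [Bset]
      by_cases hAm : (Aset K m L2).card = m
      · rw [if_pos hAm]
        simpa using hBposcard
      · rw [if_neg hAm, hi', hgd2]
        exact Finset.card_lt_card (Finset.sdiff_ssubset hTsubB hTne)
    · -- the new part does not fit: i' = i
      have hle : i ≤ iIdx K m L2 :=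
        le_iIdx L2 (by omega) (by rw [hs_eq i (le_refl i)]; exact h_s_i)
      have hge : iIdx K m L2 ≤ i := by
        by_contra hgt
        push_neg at hgt
        have hspec := sum_take_iIdx_le (K := K) (m := m) L2
        have hmono := sum_take_mono L2 (show i + 1 ≤ iIdx K m L2 by omega)
        omega
      have hi' : iIdx K m L2 = i := le_antisymm hge hle
      have hAset2 : Aset K m L2 = Aset K m L := by
        show (L2.take (iIdx K m L2)).foldr (· ∪ ·) ∅ = Aset K m L
        rw [hi', hs_eq i (le_refl i)]
        rfl
      have hgd2 : L2.getD i ∅ = T := by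
        have hsplit : L2 = L.take i ++ T :: ((B \ T) :: L.drop (i + 1)) := by
          rw [hL']
          simp
        have h := getD_append_mid (L.take i) ((B \ T) :: L.drop (i + 1)) T ∅
        rw [htklen] at h
        rw [hsplit]
        exact h
      show (Bset K m L2).card < B.card
      rw [Bset, hAset2, if_neg hA, hi', hgd2]
      exact Finset.card_lt_card hTB

lemma partitionOf_nil_pairwise : (partitionOf K m []).Pairwise Disjoint := by
  show List.Pairwise Disjoint [Finset.univ]
  simp

lemma Bnode_card_le (l : List (Finset (Fin K))) : (Bnode K m l).card ≤ K :=
  le_trans (Finset.card_le_univ _) (by simp)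

lemma run_spec (hm : 1 ≤ m) (hK : m ≤ K) (c : List (Finset (Fin K)) → ℝ)
    (hc : ∀ l, Valid K m l → c l ∈ Set.Icc (0 : ℝ) (1 / K))
    (ε : ℝ) (x : Fin K → ℝ) :
    ∀ f l, Valid K m l → (partitionOf K m l).Pairwise Disjoint →
      (Bnode K m l).card ≤ f → l.length + (Bnode K m l).card ≤ K →
      Bnode K m (run K m c ε x f l) = ∅ ∨
        (stopAt K m c ε x (run K m c ε x f l) ∧
          (run K m c ε x f l).length + 1 ≤ K) := by
  intro f
  induction f with
  | zero =>
    intro l _ _ hcard _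
    left
    show Bnode K m l = ∅
    exact Finset.card_eq_zero.mp (Nat.le_zero.mp hcard)
  | succ f ih =>
    intro l hv hp hcard hlen
    by_cases hB : Bnode K m l = ∅
    · left
      simp only [run, if_pos hB]
      exact hB
    · have h1card : 1 ≤ (Bnode K m l).card :=
        Finset.card_pos.mpr (Finset.nonempty_iff_ne_empty.mpr hB)
      by_cases hst : stopAt K m c ε x l
      · right
        simp only [run, if_neg hB, if_pos hst]
        exact ⟨hst, by omega⟩
      · simp only [run, if_neg hB, if_neg hst]
        have h2 : 2 ≤ (Bnode K m l).card := two_le_card_Bnode hp hB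
        obtain ⟨hc0, hc1⟩ := hc l hv
        have hex : ∃ j, 1 ≤ j ∧ j < (Bnode K m l).card ∧
            c l * rangeX K x (Bnode K m l)
              ≤ gapX K x (topSet K x (Bnode K m l) j) (Bnode K m l) :=
          exists_gap x (by omega) h2 hc0 hc1
        rw [descend, dif_pos hex]
        obtain ⟨hj1, hjcard, -⟩ := Nat.find_spec hex
        have hTne : (topSet K x (Bnode K m l) (Nat.find hex)).Nonempty :=
          topSet_nonempty x _ hj1 hjcard.le
        have hTss : topSet K x (Bnode K m l) (Nat.find hex) ⊂ Bnode K m l :=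
          topSet_ssubset x _ hjcard
        have hv' : Valid K m (topSet K x (Bnode K m l) (Nat.find hex) :: l) :=
          ⟨hv, hTne, hTss⟩
        obtain ⟨hp', hcard'⟩ := child_spec _ hTne hTss hp
        refine ih _ hv' hp' (by omega) ?_
        simp only [List.length_cons]
        omega

end AuxStruct

/-- Lemma 2.5, item 3: if the output P̂ = P_{c,ε}(x) of the algorithm is not a leaf of
T_{K,m} (i.e. B(P̂) ≠ ∅), then some ancestor Q ⪯ P̂ has a child Q_j in T_{K,m} with
|gap_{Q_j}(x) - c(Q)·range_Q(x)| ≤ 10Kε. -/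
theorem stmt9 (K m : ℕ) (hm : 1 ≤ m) (hK : m ≤ K) (ε : ℝ) (hε : 0 < ε)
    (c : List (Finset (Fin K)) → ℝ)
    (hc : ∀ l, Valid K m l → c l ∈ Set.Icc (0 : ℝ) (1 / K))
    (x : Fin K → ℝ) (hx : ∀ i, x i ∈ Set.Icc (0 : ℝ) 1)
    (hnotleaf : Bnode K m (Pmap K m c ε x) ≠ ∅) :
    ∃ Q, Q <:+ Pmap K m c ε x ∧ ∃ T : Finset (Fin K), T.Nonempty ∧ T ⊂ Bnode K m Q ∧
      |gapX K x T (Bnode K m Q) - c Q * rangeX K x (Bnode K m Q)| ≤ 10 * (K : ℝ) * ε := by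
  have hroot := run_spec hm hK c hc ε x K [] trivial partitionOf_nil_pairwise
    (Bnode_card_le []) (by simpa using Bnode_card_le [])
  have hPmap : Pmap K m c ε x = run K m c ε x K [] := rfl
  rw [← hPmap] at hroot
  rcases hroot with h | ⟨hst, hlen⟩
  · exact absurd h hnotleaf
  · obtain ⟨q, hqmem, j, hj1, hjc, hbound⟩ := hst
    refine ⟨q, (List.mem_tails _ _).mp hqmem, topSet K x (Bnode K m q) j,
      topSet_nonempty x _ hj1 hjc.le, topSet_ssubset x _ hjc, ?_⟩
    refine le_trans hbound ?_
    have hn : ((Pmap K m c ε x).length - q.length + 1 : ℕ) ≤ K := by omega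
    have hncast : (((Pmap K m c ε x).length - q.length + 1 : ℕ) : ℝ) ≤ (K : ℝ) := by
      exact_mod_cast hn
    have hK0 : (0 : ℝ) ≤ (K : ℝ) := by positivity
    calc (((Pmap K m c ε x).length - q.length + 1 : ℕ) : ℝ) * (6 * ε)
        ≤ (K : ℝ) * (6 * ε) := by
          apply mul_le_mul_of_nonneg_right hncast
          positivity
      _ ≤ 10 * (K : ℝ) * ε := by nlinarith [mul_nonneg hK0 hε.le]

end MPB
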